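/- arXiv:2304.04451 — 7 statements merged into one kernel-verified Lean document; each statement's English description precedes it below -/
import Mathlib

section
/- Let ζ(dx) = exp(−U(x))dx be a probability measure on ℝᵈ with U differentiable satisfying κ_U(r) ≥ α_U − g̃_U(r)/r for all r > 0, where α_U > 0 and g̃_U is bounded non-negative. Then for every σ ∈ (0, α_U/2), the integral ∫ exp(σ|x|²) dζ(x) is finite. -/
open Real Set Filter MeasureTheory

set_option maxHeartbeats 800000

/-- Exponential integrability of asymptotically strongly log-concave measures:
if `ζ(dx) = exp(−U(x))dx` is a probability measure with
`⟪∇U(x)−∇U(y), x−y⟫ ≥ α_U|x−y|² − g̃_U(|x−y|)|x−y|` for `α_U > 0` and bounded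
nonnegative `g̃_U`, then `∫ exp(σ|x|²) dζ < ∞` for every `σ ∈ (0, α_U/2)`. -/
theorem exp_integrability_alc {d : ℕ}
    (U : EuclideanSpace ℝ (Fin d) → ℝ) (hU : Differentiable ℝ U)
    (ζ : Measure (EuclideanSpace ℝ (Fin d)))
    (hζ : ζ = volume.withDensity (fun x => ENNReal.ofReal (Real.exp (-U x))))
    (hprob : IsProbabilityMeasure ζ)
    (α : ℝ) (hα : 0 < α) (gt : ℝ → ℝ) (Gt : ℝ)
    (hg_nonneg : ∀ r : ℝ, 0 < r → 0 ≤ gt r)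
    (hg_bdd : ∀ r : ℝ, 0 < r → gt r ≤ Gt)
    (hκ : ∀ x y : EuclideanSpace ℝ (Fin d), x ≠ y →
      α * ‖x - y‖ ^ 2 - gt ‖x - y‖ * ‖x - y‖ ≤
        (inner ℝ (gradient U x - gradient U y) (x - y) : ℝ)) :
    ∀ σ : ℝ, σ ∈ Ioo 0 (α / 2) →
      Integrable (fun x : EuclideanSpace ℝ (Fin d) => Real.exp (σ * ‖x‖ ^ 2)) ζ := by
  intro σ hσ
  obtain ⟨hσ0, hσα⟩ := hσ
  have hGt : 0 ≤ Gt := (hg_nonneg 1 one_pos).trans (hg_bdd 1 one_pos)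
  have hgrad : ∀ z v : EuclideanSpace ℝ (Fin d),
      (inner ℝ (gradient U z) v : ℝ) = fderiv ℝ U z v := by
    intro z v
    rw [gradient]
    exact InnerProductSpace.toDual_symm_apply
  -- Lower bound on U
  have hlow : ∀ x : EuclideanSpace ℝ (Fin d),
      U 0 + inner ℝ (gradient U 0) x + α/2 * ‖x‖^2 - Gt * ‖x‖ ≤ U x := by
    intro x
    rcases eq_or_ne x 0 with rfl | hx
    · simp
    have hxn : 0 < ‖x‖ := norm_pos_iff.mpr hx
    set c0 : ℝ := inner ℝ (gradient U 0) x with hc0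
    set F : ℝ → ℝ := fun t =>
      U (t • x) - (α/2 * t^2 * ‖x‖^2 - Gt * t * ‖x‖ + t * c0) with hF
    have hd : ∀ t : ℝ, HasDerivAt F
        ((inner ℝ (gradient U (t • x)) x : ℝ) - (α * t * ‖x‖^2 - Gt * ‖x‖ + c0)) t := by
      intro t
      have h1 : HasDerivAt (fun t : ℝ => t • x) x t := by
        simpa using (hasDerivAt_id t).smul_const x
      have h2 : HasDerivAt (fun t : ℝ => U (t • x)) (fderiv ℝ U (t • x) x) t :=
        (hU (t • x)).hasFDerivAt.comp_hasDerivAt t h1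
      rw [← hgrad] at h2
      have h3 : HasDerivAt (fun t : ℝ => α/2 * t^2 * ‖x‖^2 - Gt * t * ‖x‖ + t * c0)
          (α * t * ‖x‖^2 - Gt * ‖x‖ + c0) t := by
        have ha : HasDerivAt (fun t : ℝ => α/2 * t^2 * ‖x‖^2)
            (α * t * ‖x‖^2) t := by
          have := ((hasDerivAt_pow 2 t).const_mul (α/2)).mul_const (‖x‖^2)
          refine this.congr_deriv ?_
          ring
        have hb : HasDerivAt (fun t : ℝ => Gt * t * ‖x‖) (Gt * ‖x‖) t := by
          have := ((hasDerivAt_id t).const_mul Gt).mul_const (‖x‖)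
          refine this.congr_deriv ?_
          ring
        have hc : HasDerivAt (fun t : ℝ => t * c0) c0 t := by
          simpa using (hasDerivAt_id t).mul_const c0
        exact (ha.sub hb).add hc
      exact h2.sub h3
    have hmono : MonotoneOn F (Icc 0 1) := by
      apply monotoneOn_of_deriv_nonneg (convex_Icc 0 1)
      · exact Continuous.continuousOn (by
          have : Continuous F := by
            have : Differentiable ℝ F := fun t => (hd t).differentiableAt
            exact this.continuous
          exact this)
      · intro t _
        exact (hd t).differentiableAt.differentiableWithinAt
      · intro t ht
        rw [interior_Icc] at ht
        rw [(hd t).deriv]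
        have hts : (0:ℝ) < t := ht.1
        have hne : t • x ≠ 0 := smul_ne_zero (ne_of_gt hts) hx
        have key := hκ (t • x) 0 hne
        rw [sub_zero] at key
        have hnorm : ‖t • x‖ = t * ‖x‖ := by
          rw [norm_smul, Real.norm_eq_abs, abs_of_pos hts]
        have hbd : gt ‖t • x‖ ≤ Gt := hg_bdd _ (by rw [hnorm]; positivity)
        have hinner : (inner ℝ (gradient U (t • x) - gradient U 0) (t • x) : ℝ)
            = t * ((inner ℝ (gradient U (t • x)) x : ℝ) - c0) := by
          rw [real_inner_smul_right, inner_sub_left, hc0]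
        rw [hnorm] at key hbd
        rw [hinner] at key
        nlinarith [hxn, hts, key, hbd, mul_pos hts hxn,
          mul_le_mul_of_nonneg_right hbd (le_of_lt (mul_pos hts hxn))]
    have h01 := hmono (left_mem_Icc.mpr zero_le_one) (right_mem_Icc.mpr zero_le_one) zero_le_one
    have hF0 : F 0 = U 0 := by simp [hF]
    have hF1 : F 1 = U x - (α/2 * ‖x‖^2 - Gt * ‖x‖ + c0) := by simp [hF]
    rw [hF0, hF1] at h01
    linarith
  -- Reduce to integrability w.r.t. volume
  subst hζ
  have hUc : Continuous U := hU.continuous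
  rw [integrable_withDensity_iff (f := fun x => ENNReal.ofReal (Real.exp (-U x))) (hUc.neg.rexp.measurable.ennreal_ofReal) (Eventually.of_forall fun x => ENNReal.ofReal_lt_top)]
  have hsimp : (fun x : EuclideanSpace ℝ (Fin d) =>
      Real.exp (σ * ‖x‖ ^ 2) * (ENNReal.ofReal (Real.exp (-U x))).toReal)
      = fun x => Real.exp (σ * ‖x‖^2 - U x) := by
    funext x
    rw [ENNReal.toReal_ofReal (Real.exp_nonneg _), ← Real.exp_add]
    ring_nf
  rw [hsimp]
  set c : ℝ := α/2 - σ with hc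
  have hcpos : 0 < c := by simp [hc]; linarith
  set C : ℝ := ‖gradient U 0‖ + Gt with hC
  have hCnn : 0 ≤ C := by positivity
  -- Gaussian dominating function
  have hgauss : Integrable (fun x : EuclideanSpace ℝ (Fin d) =>
      Real.exp (-(c/2) * ‖x‖^2)) volume := by
    have h := (GaussianFourier.integrable_cexp_neg_mul_sq_norm_add
      (V := EuclideanSpace ℝ (Fin d)) (b := (c/2 : ℂ)) (by simpa using by positivity) 0 0).norm
    convert h using 2 with x
    simp [Complex.norm_exp, ← Complex.ofReal_pow]
  have hmeas : AEStronglyMeasurable (fun x : EuclideanSpace ℝ (Fin d) =>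
      Real.exp (σ * ‖x‖^2 - U x)) volume := by
    apply Continuous.aestronglyMeasurable
    fun_prop
  apply ((hgauss.const_mul (Real.exp (C^2/(2*c) - U 0))).mono' hmeas)
  filter_upwards with x
  rw [Real.norm_eq_abs, abs_of_pos (Real.exp_pos _), ← Real.exp_add]
  apply Real.exp_le_exp.mpr
  have h1 : -(‖gradient U 0‖ * ‖x‖) ≤ (inner ℝ (gradient U 0) x : ℝ) := by
    have := abs_real_inner_le_norm (gradient U 0) x
    have := neg_abs_le (inner ℝ (gradient U 0) x : ℝ)
    linarith
  have h2 := hlow x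
  have h3 : C * ‖x‖ ≤ c/2 * ‖x‖^2 + C^2/(2*c) := by
    have key3 : 2 * c * (C * ‖x‖) ≤ 2 * c * (c/2 * ‖x‖^2 + C^2/(2*c)) := by
      have heq : 2 * c * (c/2 * ‖x‖^2 + C^2/(2*c)) = c^2 * ‖x‖^2 + C^2 := by
        field_simp
      rw [heq]
      nlinarith [sq_nonneg (c * ‖x‖ - C)]
    exact le_of_mul_le_mul_left key3 (by positivity)
  nlinarith [norm_nonneg x]
end

section
/- Let ν be a probability measure on ℝᵈ such that ∫ exp(σ|x|²) dν(x) < ∞ for some σ > 0, and let p be a probability measure with finite relative entropy H(p|ν) < ∞. Then M₁(p) ≤ M₁(ν) + C₁ √(H(p|ν)) where C₁ = ((2/σ)(1 + log ∫ e^{σ|x|²} dν))^{1/2}, and M₂(p) ≤ M₂(ν) + C₂(√(H(p|ν)) + H(p|ν)/2) where C₂ = (3/σ) + (2/σ)∫ e^{σ|x|²} dν. -/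
open Real Set Filter MeasureTheory

set_option maxHeartbeats 1000000

private lemma aux_young {u t : ℝ} (hu : 0 ≤ u) :
    u * t ≤ u * Real.log u - u + Real.exp t := by
  rcases eq_or_lt_of_le hu with h | h
  · simp [← h, Real.exp_nonneg t]
  · have h1 := Real.add_one_le_exp (t - Real.log u)
    rw [Real.exp_sub, Real.exp_log h] at h1
    have h2 : (t - Real.log u + 1) * u ≤ Real.exp t := by
      rw [← le_div_iff₀ h]; exact h1
    nlinarith

private lemma aux_h_nonneg {u : ℝ} (hu : 0 ≤ u) : 0 ≤ u * Real.log u - u + 1 := by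
  have := aux_young (t := 0) hu; simpa using this



private lemma aux_anti {f f' : ℝ → ℝ} {s : Set ℝ} (hs : Convex ℝ s)
    (hd : ∀ x ∈ s, HasDerivAt f (f' x) x) (h0 : ∀ x ∈ interior s, f' x ≤ 0) :
    AntitoneOn f s :=
  antitoneOn_of_deriv_nonpos hs (fun x hx => (hd x hx).continuousAt.continuousWithinAt)
    (fun x hx => ((hd x (interior_subset hx)).differentiableAt.differentiableWithinAt))
    (fun x hx => by rw [(hd x (interior_subset hx)).deriv]; exact h0 x hx)

private lemma aux_mono {f f' : ℝ → ℝ} {s : Set ℝ} (hs : Convex ℝ s)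
    (hd : ∀ x ∈ s, HasDerivAt f (f' x) x) (h0 : ∀ x ∈ interior s, 0 ≤ f' x) :
    MonotoneOn f s :=
  monotoneOn_of_deriv_nonneg hs (fun x hx => (hd x hx).continuousAt.continuousWithinAt)
    (fun x hx => ((hd x (interior_subset hx)).differentiableAt.differentiableWithinAt))
    (fun x hx => by rw [(hd x (interior_subset hx)).deriv]; exact h0 x hx)

private lemma aux_chi_deriv {x : ℝ} (hx : 0 < x) :
    HasDerivAt (fun t => (t+1)*Real.log t - 2*(t-1)) (Real.log x + x⁻¹ - 1) x := by
  have hlog := Real.hasDerivAt_log (ne_of_gt hx)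
  have h1 : HasDerivAt (fun t : ℝ => (t+1)*Real.log t) (1*Real.log x + (x+1)*x⁻¹) x :=
    ((hasDerivAt_id x).add_const 1).mul hlog
  have h2 : HasDerivAt (fun t : ℝ => 2*(t-1)) (2*1) x :=
    ((hasDerivAt_id x).sub_const 1).const_mul 2
  have h3 := h1.sub h2
  refine h3.congr_deriv ?_
  have : x*x⁻¹ = 1 := mul_inv_cancel₀ (ne_of_gt hx)
  nlinarith [this]

private lemma aux_chi_mono : MonotoneOn (fun t => (t+1)*Real.log t - 2*(t-1)) (Ioi (0:ℝ)) := by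
  apply aux_mono (f' := fun x => Real.log x + x⁻¹ - 1) (convex_Ioi 0)
    (fun x hx => aux_chi_deriv hx)
  intro x hx
  rw [interior_Ioi] at hx
  have h1 := Real.log_le_sub_one_of_pos (inv_pos.2 hx)
  rw [Real.log_inv] at h1
  linarith

private lemma aux_psi_deriv {x : ℝ} (hx : 0 < x) :
    HasDerivAt (fun t => (2*t+4)*(t*Real.log t - t + 1) - 3*(t-1)^2)
      (4*((x+1)*Real.log x - 2*(x-1))) x := by
  have hlog := Real.hasDerivAt_log (ne_of_gt hx)
  have hA : HasDerivAt (fun t : ℝ => 2*t+4) (2*1) x := ((hasDerivAt_id x).const_mul 2).add_const 4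
  have hB : HasDerivAt (fun t : ℝ => t*Real.log t - t + 1) (1*Real.log x + x*x⁻¹ - 1) x :=
    (((hasDerivAt_id x).mul hlog).sub (hasDerivAt_id x)).add_const 1
  have hC : HasDerivAt (fun t : ℝ => 3*(t-1)^2) (3*(2*(x-1)^1*1)) x :=
    (((hasDerivAt_id x).sub_const 1).pow 2).const_mul 3
  have h3 := (hA.mul hB).sub hC
  refine h3.congr_deriv ?_
  have : x*x⁻¹ = 1 := mul_inv_cancel₀ (ne_of_gt hx)
  rw [this]; ring

private lemma aux_pinsker {t : ℝ} (ht : 0 ≤ t) :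
    3*(t-1)^2 ≤ (2*t+4)*(t*Real.log t - t + 1) := by
  rcases eq_or_lt_of_le ht with h | h
  · simp [← h, Real.log_zero]; norm_num
  · have key : 0 ≤ (2*t+4)*(t*Real.log t - t + 1) - 3*(t-1)^2 := by
      rcases le_or_gt 1 t with h1 | h1
      · have hmono : MonotoneOn (fun t => (2*t+4)*(t*Real.log t - t + 1) - 3*(t-1)^2) (Ici 1) := by
          apply aux_mono (f' := fun x => 4*((x+1)*Real.log x - 2*(x-1))) (convex_Ici 1)
            (fun x hx => aux_psi_deriv (lt_of_lt_of_le one_pos hx))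
          intro x hx
          rw [interior_Ici] at hx
          have := aux_chi_mono (mem_Ioi.2 one_pos) (mem_Ioi.2 (lt_trans one_pos hx)) (le_of_lt hx)
          simp only [Real.log_one] at this
          nlinarith
        have := hmono (mem_Ici.2 le_rfl) (mem_Ici.2 h1) h1
        simpa using this
      · have hanti : AntitoneOn (fun t => (2*t+4)*(t*Real.log t - t + 1) - 3*(t-1)^2) (Icc t 1) := by
          apply aux_anti (f' := fun x => 4*((x+1)*Real.log x - 2*(x-1))) (convex_Icc t 1)
            (fun x hx => aux_psi_deriv (lt_of_lt_of_le h hx.1))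
          intro x hx
          rw [interior_Icc] at hx
          have hx0 : 0 < x := lt_trans h hx.1
          have := aux_chi_mono (mem_Ioi.2 hx0) (mem_Ioi.2 one_pos) (le_of_lt hx.2)
          simp only [Real.log_one] at this
          nlinarith
        have := hanti (mem_Icc.2 ⟨le_rfl, le_of_lt h1⟩) (mem_Icc.2 ⟨le_of_lt h1, le_rfl⟩) (le_of_lt h1)
        simpa using this
    linarith

private lemma aux_exp_convex {l x : ℝ} (hl0 : 0 ≤ l) (hl1 : l ≤ 1) :
    Real.exp (l*x) ≤ l * Real.exp x + (1 - l) := by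
  have h := convexOn_exp.2 (mem_univ x) (mem_univ (0:ℝ)) hl0 (by linarith : (0:ℝ) ≤ 1 - l)
    (by ring)
  simp only [smul_eq_mul, mul_zero, add_zero, Real.exp_zero, mul_one] at h
  exact h

private lemma aux_exp_taylor {s l : ℝ} (hs : 0 ≤ s) (hl0 : 0 ≤ l) (hl1 : l ≤ 1) :
    Real.exp (l*s) ≤ 1 + l*s + l^2*(Real.exp s - 1 - s) := by
  have hmono : MonotoneOn
      (fun x => l^2*(Real.exp x - 1 - x) - (Real.exp (l*x) - 1 - l*x)) (Ici 0) := by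
    apply aux_mono (f' := fun x => l^2*(Real.exp x - 1) - (l * Real.exp (l*x) - l)) (convex_Ici 0)
    · intro x _
      have h1 : HasDerivAt (fun x : ℝ => Real.exp (l*x)) (Real.exp (l*x) * l) x := by
        have := ((hasDerivAt_id x).const_mul l).exp
        simpa using this
      have h2 : HasDerivAt (fun x : ℝ => l^2*(Real.exp x - 1 - x))
          (l^2*(Real.exp x - 1)) x := by
        exact (((Real.hasDerivAt_exp x).sub_const 1).sub (hasDerivAt_id x)).const_mul (l^2)
      have h3 : HasDerivAt (fun x : ℝ => Real.exp (l*x) - 1 - l*x)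
          (Real.exp (l*x) * l - l) x := by
        have := (h1.sub_const 1).sub ((hasDerivAt_id x).const_mul l)
        refine this.congr_deriv ?_; ring
      have := h2.sub h3
      refine this.congr_deriv ?_; ring
    · intro x hx
      rw [interior_Ici] at hx
      have hcx := aux_exp_convex (x := x) hl0 hl1
      have h4 : l * Real.exp (l*x) ≤ l * (l * Real.exp x + (1 - l)) :=
        mul_le_mul_of_nonneg_left hcx hl0
      nlinarith
  have := hmono (mem_Ici.2 le_rfl) (mem_Ici.2 hs) hs
  simp only [mul_zero, Real.exp_zero] at this
  nlinarith [this]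

private lemma aux_amgm {I U V : ℝ} (hU : 0 ≤ U) (hV : 0 ≤ V)
    (h : ∀ s : ℝ, 0 < s → I ≤ s*U/2 + V/(2*s)) : I ≤ Real.sqrt (U*V) := by
  have hUV : 0 ≤ Real.sqrt (U*V) := Real.sqrt_nonneg _
  rcases eq_or_lt_of_le hU with hU0 | hU0
  · -- U = 0
    have hI : I ≤ 0 := by
      apply le_of_forall_pos_le_add
      intro ε hε
      rcases eq_or_lt_of_le hV with hV0 | hV0
      · have := h 1 one_pos; rw [← hU0, ← hV0] at this; simpa using this.trans (by linarith)
      · have := h (V/(2*ε)) (by positivity)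
        rw [← hU0] at this
        calc I ≤ V/(2*ε)*0/2 + V/(2*(V/(2*ε))) := this
          _ = 0 + ε := by rw [mul_zero, zero_div]; congr 1; field_simp
          _ ≤ 0 + ε := le_rfl
    linarith
  rcases eq_or_lt_of_le hV with hV0 | hV0
  · have hI : I ≤ 0 := by
      apply le_of_forall_pos_le_add
      intro ε hε
      have := h (2*ε/U) (by positivity)
      rw [← hV0] at this
      calc I ≤ 2*ε/U*U/2 + 0/(2*(2*ε/U)) := this
        _ = ε + 0 := by rw [zero_div]; congr 1; field_simp
        _ ≤ 0 + ε := by linarith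
    linarith
  · have hs : 0 < Real.sqrt (V/U) := Real.sqrt_pos.2 (by positivity)
    have := h _ hs
    have hsq : Real.sqrt (V/U) ^ 2 = V/U := Real.sq_sqrt (by positivity)
    have key : Real.sqrt (V/U)*U/2 + V/(2*Real.sqrt (V/U)) = Real.sqrt (U*V) := by
      have h1 : V/(2*Real.sqrt (V/U)) = Real.sqrt (V/U)*U/2 := by
        rw [div_eq_iff (by positivity : (2*Real.sqrt (V/U)) ≠ 0)]
        have h2' : Real.sqrt (V/U)*U/2*(2*Real.sqrt (V/U)) = Real.sqrt (V/U)^2*U := by ring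
        rw [h2', hsq]
        field_simp
      rw [h1]
      have h2 : (Real.sqrt (V/U)*U/2 + Real.sqrt (V/U)*U/2)^2 = U*V := by
        have : (Real.sqrt (V/U)*U/2 + Real.sqrt (V/U)*U/2)^2
            = Real.sqrt (V/U)^2*U^2 := by ring
        rw [this, hsq]; field_simp
      rw [← h2, Real.sqrt_sq (by positivity)]
    rw [key] at this
    exact this



private lemma aux_pt {w u v s : ℝ} (hw : 0 ≤ w) (hu : 0 ≤ u) (hv : 0 ≤ v) (hs : 0 < s)
    (hwuv : w^2 ≤ u*v) : w ≤ s*u/2 + v/(2*s) := by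
  have h1 : w ≤ Real.sqrt (u*v) := by
    rw [← Real.sqrt_sq hw]; exact Real.sqrt_le_sqrt hwuv
  have h2 : Real.sqrt (u*v) = Real.sqrt (s*u) * Real.sqrt (v/s) := by
    rw [← Real.sqrt_mul (by positivity)]
    congr 1; field_simp
  have h3 := two_mul_le_add_sq (Real.sqrt (s*u)) (Real.sqrt (v/s))
  rw [Real.sq_sqrt (by positivity), Real.sq_sqrt (by positivity)] at h3
  have hvs : v/(2*s) = (v/s)/2 := by ring
  rw [hvs]
  rw [h2] at h1
  linarith



/-- Moment bounds in terms of relative entropy (weighted Csiszár–Kullback–Pinsker):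
if `∫ e^{σ|x|²} dν < ∞` and `H(p|ν) < ∞`, then
`M₁(p) ≤ M₁(ν) + C₁ √H(p|ν)` and `M₂(p) ≤ M₂(ν) + C₂(√H(p|ν) + H(p|ν)/2)`. -/
theorem moment_bounds_from_entropy {d : ℕ}
    (ν p : Measure (EuclideanSpace ℝ (Fin d)))
    [IsProbabilityMeasure ν] [IsProbabilityMeasure p]
    (σ : ℝ) (hσ : 0 < σ)
    (hexp : Integrable (fun x => Real.exp (σ * ‖x‖ ^ 2)) ν)
    (hac : p ≪ ν)
    (hlog : Integrable (fun x => Real.log ((p.rnDeriv ν x).toReal)) p)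
    (H : ℝ) (hH : H = ∫ x, Real.log ((p.rnDeriv ν x).toReal) ∂p)
    (hM1p : Integrable (fun x => ‖x‖) p) (hM1ν : Integrable (fun x => ‖x‖) ν)
    (hM2p : Integrable (fun x => ‖x‖ ^ 2) p) (hM2ν : Integrable (fun x => ‖x‖ ^ 2) ν) :
    (∫ x, ‖x‖ ∂p) ≤ (∫ x, ‖x‖ ∂ν)
        + Real.sqrt ((2 / σ) * (1 + Real.log (∫ x, Real.exp (σ * ‖x‖ ^ 2) ∂ν)))
          * Real.sqrt H ∧
    (∫ x, ‖x‖ ^ 2 ∂p) ≤ (∫ x, ‖x‖ ^ 2 ∂ν)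
        + (3 / σ + (2 / σ) * ∫ x, Real.exp (σ * ‖x‖ ^ 2) ∂ν)
          * (Real.sqrt H + H / 2) := by
  have hσ' : (0:ℝ) < Real.sqrt σ := Real.sqrt_pos.2 hσ
  set φ : EuclideanSpace ℝ (Fin d) → ℝ := fun x => (p.rnDeriv ν x).toReal with hφdef
  have hφnn : ∀ x, 0 ≤ φ x := fun x => ENNReal.toReal_nonneg
  have hφmeas : Measurable φ := (Measure.measurable_rnDeriv p ν).ennreal_toReal
  have hφint : Integrable φ ν := Measure.integrable_toReal_rnDeriv
  have hφ1 : ∫ x, φ x ∂ν = 1 := by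
    simp only [hφdef]
    rw [Measure.integral_toReal_rnDeriv hac]; simp
  have hTint : ∀ g : EuclideanSpace ℝ (Fin d) → ℝ, Integrable g p →
      Integrable (fun x => φ x * g x) ν := fun g hg => by
    haveI := Measure.haveLebesgueDecomposition_of_sigmaFinite p ν
    simpa [smul_eq_mul] using (integrable_rnDeriv_smul_iff hac).2 hg
  have hTeq : ∀ g : EuclideanSpace ℝ (Fin d) → ℝ,
      ∫ x, φ x * g x ∂ν = ∫ x, g x ∂p := fun g => by
    haveI := Measure.haveLebesgueDecomposition_of_sigmaFinite p ν
    simpa [smul_eq_mul] using integral_rnDeriv_smul hac (f := g)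
  set Z : ℝ := ∫ x, Real.exp (σ * ‖x‖ ^ 2) ∂ν with hZdef
  have hZ1 : 1 ≤ Z := by
    rw [hZdef]
    calc (1:ℝ) = ∫ _, (1:ℝ) ∂ν := by simp
    _ ≤ _ := integral_mono (integrable_const 1) hexp (fun x => Real.one_le_exp (by positivity))
  have hZpos : 0 < Z := lt_of_lt_of_le one_pos hZ1
  set L : ℝ := Real.log Z with hLdef
  have hL0 : 0 ≤ L := Real.log_nonneg hZ1
  have hexpL : Real.exp L = Z := by rw [hLdef, Real.exp_log hZpos]
  set A : ℝ := σ * ∫ x, ‖x‖ ^ 2 ∂p with hAdef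
  set B : ℝ := σ * ∫ x, ‖x‖ ^ 2 ∂ν with hBdef
  have hA0 : 0 ≤ A := mul_nonneg hσ.le (integral_nonneg fun x => by positivity)
  have hB0 : 0 ≤ B := mul_nonneg hσ.le (integral_nonneg fun x => by positivity)
  have hGint : Integrable (fun x => σ * ‖x‖ ^ 2) ν := hM2ν.const_mul σ
  have hGB : ∫ x, σ * ‖x‖ ^ 2 ∂ν = B := integral_const_mul σ _
  have hGA : ∫ x, σ * ‖x‖ ^ 2 ∂p = A := integral_const_mul σ _
  have hφG : Integrable (fun x => φ x * (σ * ‖x‖ ^ 2)) ν := hTint _ (hM2p.const_mul σ)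
  have hφGA : ∫ x, φ x * (σ * ‖x‖ ^ 2) ∂ν = A := by rw [hTeq]; exact hGA
  have hφlog : Integrable (fun x => φ x * Real.log (φ x)) ν := hTint _ hlog
  have hHeq : ∫ x, φ x * Real.log (φ x) ∂ν = H := by rw [hTeq]; exact hH.symm
  clear_value φ Z L A B
  have hsub1 : Integrable (fun x => φ x * Real.log (φ x) - φ x) ν := hφlog.sub hφint
  have hvint : Integrable (fun x => φ x * Real.log (φ x) - φ x + 1) ν :=
    hsub1.add (integrable_const 1)
  have hvH : ∫ x, (φ x * Real.log (φ x) - φ x + 1) ∂ν = H := by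
    rw [integral_add hsub1 (integrable_const 1), integral_sub hφlog hφint, hHeq, hφ1]
    simp
  have hH0 : 0 ≤ H := hvH ▸ integral_nonneg fun x => aux_h_nonneg (hφnn x)
  have hEZ : Integrable (fun x => Real.exp (σ * ‖x‖ ^ 2) * Z⁻¹) ν := hexp.mul_const Z⁻¹
  have hEZ1 : Integrable (fun x => Real.exp (σ * ‖x‖ ^ 2) * Z⁻¹ - 1) ν :=
    hEZ.sub (integrable_const 1)
  have hexpZ : ∫ x, Real.exp (σ * ‖x‖ ^ 2) * Z⁻¹ ∂ν = 1 := by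
    rw [integral_mul_const, ← hZdef]
    exact mul_inv_cancel₀ hZpos.ne'
  -- B ≤ L
  have hBL : B ≤ L := by
    have hGL : Integrable (fun x => σ * ‖x‖ ^ 2 - L) ν := hGint.sub (integrable_const L)
    have hpt : ∀ x : EuclideanSpace ℝ (Fin d),
        σ * ‖x‖ ^ 2 - L ≤ Real.exp (σ * ‖x‖ ^ 2) * Z⁻¹ - 1 := by
      intro x
      have h1 := Real.add_one_le_exp (σ * ‖x‖ ^ 2 - L)
      rw [Real.exp_sub, hexpL, div_eq_mul_inv] at h1
      linarith
    have h2 := integral_mono hGL hEZ1 hpt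
    rw [integral_sub hGint (integrable_const L), integral_sub hEZ (integrable_const 1),
      hGB, hexpZ] at h2
    simp only [integral_const, measure_univ, probReal_univ, ENNReal.toReal_one, one_smul, smul_eq_mul,
      one_mul] at h2
    linarith
  -- A ≤ H + L  (Donsker–Varadhan)
  have hAL : A ≤ H + L := by
    have hLHS : Integrable (fun x => φ x * (σ * ‖x‖ ^ 2) - L * φ x) ν :=
      hφG.sub (hφint.const_mul L)
    have hRHS : Integrable (fun x => (φ x * Real.log (φ x) - φ x + 1)
        + (Real.exp (σ * ‖x‖ ^ 2) * Z⁻¹ - 1)) ν := hvint.add hEZ1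
    have hpt : ∀ x : EuclideanSpace ℝ (Fin d), φ x * (σ * ‖x‖ ^ 2) - L * φ x ≤
        (φ x * Real.log (φ x) - φ x + 1) + (Real.exp (σ * ‖x‖ ^ 2) * Z⁻¹ - 1) := by
      intro x
      have h1 := aux_young (u := φ x) (t := σ * ‖x‖ ^ 2 - L) (hφnn x)
      rw [Real.exp_sub, hexpL, div_eq_mul_inv] at h1
      nlinarith [h1]
    have h2 := integral_mono hLHS hRHS hpt
    rw [integral_sub hφG (hφint.const_mul L), hφGA, integral_const_mul, hφ1,
        integral_add hvint hEZ1, hvH,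
        integral_sub hEZ (integrable_const 1), hexpZ] at h2
    simp only [integral_const, measure_univ, probReal_univ, ENNReal.toReal_one, one_smul, smul_eq_mul,
      one_mul, mul_one] at h2
    linarith
  -- claim for second moment
  have claim2 : ∀ l : ℝ, 0 < l → l ≤ 1 → A - B ≤ H / l + l * (Z - 1) := by
    intro l hl0 hl1
    have hLHS : Integrable (fun x => l * (φ x * (σ * ‖x‖ ^ 2))) ν := hφG.const_mul l
    have hr1 : Integrable (fun x => l * (σ * ‖x‖ ^ 2)) ν := hGint.const_mul l
    have hr2' : Integrable (fun x => Real.exp (σ * ‖x‖ ^ 2) - 1) ν :=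
      hexp.sub (integrable_const 1)
    have hr2'' : Integrable (fun x => Real.exp (σ * ‖x‖ ^ 2) - 1 - σ * ‖x‖ ^ 2) ν :=
      hr2'.sub hGint
    have hr2 : Integrable (fun x => l ^ 2 * (Real.exp (σ * ‖x‖ ^ 2) - 1 - σ * ‖x‖ ^ 2)) ν :=
      hr2''.const_mul (l ^ 2)
    have hr12 : Integrable (fun x => l * (σ * ‖x‖ ^ 2)
        + l ^ 2 * (Real.exp (σ * ‖x‖ ^ 2) - 1 - σ * ‖x‖ ^ 2)) ν := hr1.add hr2
    have hRHS : Integrable (fun x => (φ x * Real.log (φ x) - φ x + 1)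
        + (l * (σ * ‖x‖ ^ 2) + l ^ 2 * (Real.exp (σ * ‖x‖ ^ 2) - 1 - σ * ‖x‖ ^ 2))) ν :=
      hvint.add hr12
    have hpt : ∀ x : EuclideanSpace ℝ (Fin d), l * (φ x * (σ * ‖x‖ ^ 2)) ≤
        (φ x * Real.log (φ x) - φ x + 1)
          + (l * (σ * ‖x‖ ^ 2) + l ^ 2 * (Real.exp (σ * ‖x‖ ^ 2) - 1 - σ * ‖x‖ ^ 2)) := by
      intro x
      have h1 := aux_young (u := φ x) (t := l * (σ * ‖x‖ ^ 2)) (hφnn x)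
      have h2 := aux_exp_taylor (s := σ * ‖x‖ ^ 2) (l := l) (by positivity) hl0.le hl1
      nlinarith [h1, h2]
    have h3 := integral_mono hLHS hRHS hpt
    rw [integral_const_mul, hφGA, integral_add hvint hr12, hvH,
        integral_add hr1 hr2, integral_const_mul, hGB, integral_const_mul,
        integral_sub hr2' hGint, integral_sub hexp (integrable_const 1), ← hZdef, hGB] at h3
    simp only [integral_const, measure_univ, probReal_univ, ENNReal.toReal_one, one_smul, smul_eq_mul,
      one_mul] at h3
    have h4 : A - B ≤ (H + l ^ 2 * (Z - 1)) / l := by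
      rw [le_div_iff₀ hl0]
      nlinarith [hB0, sq_nonneg l]
    calc A - B ≤ (H + l ^ 2 * (Z - 1)) / l := h4
      _ = H / l + l * (Z - 1) := by field_simp
  -- second moment conclusion (multiplied by σ)
  have goal2σ : A - B ≤ (3 + 2 * Z) * (Real.sqrt H + H / 2) := by
    rcases eq_or_lt_of_le hH0 with h0 | h0
    · have hAB : A - B ≤ 0 := by
        apply le_of_forall_pos_le_add
        intro ε hε
        have hl0 : 0 < min 1 (ε / Z) := lt_min one_pos (by positivity)
        have h5 := claim2 _ hl0 (min_le_left _ _)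
        rw [← h0] at h5
        have h6 : min 1 (ε / Z) * (Z - 1) ≤ (ε / Z) * Z :=
          mul_le_mul (min_le_right _ _) (by linarith) (by linarith) (by positivity)
        have h7 : (ε / Z) * Z = ε := by field_simp
        simp only [zero_div, zero_add] at h5
        linarith
      have h8 : Real.sqrt H + H / 2 = 0 := by rw [← h0]; simp
      rw [h8, mul_zero]; linarith
    rcases le_or_gt H 1 with h1 | h1
    · have hl0 : 0 < Real.sqrt H := Real.sqrt_pos.2 h0
      have h5 := claim2 _ hl0 (Real.sqrt_le_one.2 h1)
      rw [Real.div_sqrt] at h5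
      have expand : (3 + 2*Z) * (Real.sqrt H + H/2)
          = 3*Real.sqrt H + 3*(H/2) + 2*(Z*Real.sqrt H) + Z*H := by ring
      have e2 : 0 ≤ Z * H := mul_nonneg (by linarith) hH0
      have e3 : 0 ≤ Z * Real.sqrt H := mul_nonneg (by linarith) (Real.sqrt_nonneg H)
      have e5 : Real.sqrt H + Real.sqrt H * (Z-1) = Z * Real.sqrt H := by ring
      linarith [h5, expand, e2, e3, e5, Real.sqrt_nonneg H, hH0]
    · have h5 := claim2 1 one_pos le_rfl
      have hs1 : 1 ≤ Real.sqrt H := Real.one_le_sqrt.2 h1.le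
      have e1 : 2*Z*1 ≤ 2*Z*Real.sqrt H := mul_le_mul_of_nonneg_left hs1 (by linarith)
      have e2 : 0 ≤ Z * H := mul_nonneg (by linarith) hH0
      have expand : (3 + 2*Z) * (Real.sqrt H + H/2)
          = 3*Real.sqrt H + 3*(H/2) + 2*Z*Real.sqrt H + Z*H := by ring
      have h5' : A - B ≤ H / 1 + 1 * (Z - 1) := h5
      have h5'' : A - B ≤ H + Z - 1 := by rw [div_one] at h5'; linarith
      linarith [hs1, e1, e2, expand, h5'', hH0, hZ1]
  -- first moment machinery
  have hsqF : ∀ x : EuclideanSpace ℝ (Fin d), (Real.sqrt σ * ‖x‖) ^ 2 = σ * ‖x‖ ^ 2 := by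
    intro x; rw [mul_pow, Real.sq_sqrt hσ.le]
  have hu1 : Integrable (fun x => 2 / 3 * (φ x * (σ * ‖x‖ ^ 2))) ν := hφG.const_mul _
  have hu2 : Integrable (fun x => 4 / 3 * (σ * ‖x‖ ^ 2)) ν := hGint.const_mul _
  have hurw : (fun x : EuclideanSpace ℝ (Fin d) => 2 / 3 * ((φ x + 2) * (σ * ‖x‖ ^ 2)))
      = fun x => 2 / 3 * (φ x * (σ * ‖x‖ ^ 2)) + 4 / 3 * (σ * ‖x‖ ^ 2) := by
    funext x; ring
  have huint : Integrable (fun x => 2 / 3 * ((φ x + 2) * (σ * ‖x‖ ^ 2))) ν := by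
    rw [hurw]; exact hu1.add hu2
  have hU : ∫ x, 2 / 3 * ((φ x + 2) * (σ * ‖x‖ ^ 2)) ∂ν = 2 / 3 * (A + 2 * B) := by
    rw [hurw, integral_add hu1 hu2, integral_const_mul, integral_const_mul, hφGA, hGB]; ring
  have hU0 : 0 ≤ 2 / 3 * (A + 2 * B) := by nlinarith [hA0, hB0]
  have hwnn : ∀ x : EuclideanSpace ℝ (Fin d), 0 ≤ Real.sqrt σ * ‖x‖ * |φ x - 1| :=
    fun x => by positivity
  have hwkey : ∀ s : ℝ, 0 < s → ∀ x : EuclideanSpace ℝ (Fin d),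
      Real.sqrt σ * ‖x‖ * |φ x - 1| ≤
        s * (2 / 3 * ((φ x + 2) * (σ * ‖x‖ ^ 2))) / 2
          + (φ x * Real.log (φ x) - φ x + 1) / (2 * s) := by
    intro s hs x
    have hG0 : 0 ≤ σ * ‖x‖ ^ 2 := by positivity
    have hu0 : 0 ≤ 2 / 3 * ((φ x + 2) * (σ * ‖x‖ ^ 2)) := by
      have := hφnn x
      nlinarith [mul_nonneg (by linarith : (0:ℝ) ≤ φ x + 2) hG0]
    apply aux_pt (hwnn x) hu0 (aux_h_nonneg (hφnn x)) hs
    have hsq2 : (Real.sqrt σ * ‖x‖ * |φ x - 1|) ^ 2 = (σ * ‖x‖ ^ 2) * (φ x - 1) ^ 2 := by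
      rw [mul_pow, hsqF x, sq_abs]
    rw [hsq2]
    have hp := aux_pinsker (hφnn x)
    nlinarith [mul_le_mul_of_nonneg_left hp (show (0:ℝ) ≤ σ * ‖x‖ ^ 2 / 3 by positivity)]
  have hwmeas : Measurable (fun x : EuclideanSpace ℝ (Fin d) =>
      Real.sqrt σ * ‖x‖ * |φ x - 1|) :=
    (measurable_norm.const_mul _).mul ((hφmeas.sub measurable_const).abs)
  have hdom : Integrable (fun x => 2 / 3 * ((φ x + 2) * (σ * ‖x‖ ^ 2)) / 2
      + (φ x * Real.log (φ x) - φ x + 1) / 2) ν := (huint.div_const 2).add (hvint.div_const 2)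
  have hwint : Integrable (fun x => Real.sqrt σ * ‖x‖ * |φ x - 1|) ν := by
    apply Integrable.mono' hdom hwmeas.aestronglyMeasurable
    apply ae_of_all
    intro x
    rw [Real.norm_eq_abs, abs_of_nonneg (hwnn x)]
    have := hwkey 1 one_pos x
    calc Real.sqrt σ * ‖x‖ * |φ x - 1| ≤
        1 * (2 / 3 * ((φ x + 2) * (σ * ‖x‖ ^ 2))) / 2
          + (φ x * Real.log (φ x) - φ x + 1) / (2 * 1) := this
      _ = 2 / 3 * ((φ x + 2) * (σ * ‖x‖ ^ 2)) / 2
          + (φ x * Real.log (φ x) - φ x + 1) / 2 := by ring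
  have hIw : ∫ x, Real.sqrt σ * ‖x‖ * |φ x - 1| ∂ν
      ≤ Real.sqrt (2 / 3 * (A + 2 * B) * H) := by
    apply aux_amgm hU0 hH0
    intro s hs
    have hg1 : Integrable (fun x => s * (2 / 3 * ((φ x + 2) * (σ * ‖x‖ ^ 2))) / 2) ν :=
      (huint.const_mul s).div_const 2
    have hg2 : Integrable (fun x => (φ x * Real.log (φ x) - φ x + 1) / (2 * s)) ν :=
      hvint.div_const (2 * s)
    have hg12 : Integrable (fun x => s * (2 / 3 * ((φ x + 2) * (σ * ‖x‖ ^ 2))) / 2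
        + (φ x * Real.log (φ x) - φ x + 1) / (2 * s)) ν := hg1.add hg2
    have h2 := integral_mono hwint hg12 (hwkey s hs)
    rw [integral_add hg1 hg2, integral_div, integral_div, integral_const_mul, hU, hvH] at h2
    exact h2
  have hΔ1 : Real.sqrt σ * ((∫ x, ‖x‖ ∂p) - ∫ x, ‖x‖ ∂ν)
      ≤ ∫ x, Real.sqrt σ * ‖x‖ * |φ x - 1| ∂ν := by
    have hFp : Integrable (fun x => Real.sqrt σ * ‖x‖) p := hM1p.const_mul _
    have hFν : Integrable (fun x => Real.sqrt σ * ‖x‖) ν := hM1ν.const_mul _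
    have hφF : Integrable (fun x => φ x * (Real.sqrt σ * ‖x‖)) ν := hTint _ hFp
    have hLHS : Integrable (fun x => φ x * (Real.sqrt σ * ‖x‖) - Real.sqrt σ * ‖x‖) ν :=
      hφF.sub hFν
    have he1 : Real.sqrt σ * ((∫ x, ‖x‖ ∂p) - ∫ x, ‖x‖ ∂ν)
        = ∫ x, (φ x * (Real.sqrt σ * ‖x‖) - Real.sqrt σ * ‖x‖) ∂ν := by
      rw [integral_sub hφF hFν, hTeq, integral_const_mul, integral_const_mul]; ring
    rw [he1]
    apply integral_mono hLHS hwint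
    intro x
    have h1 : φ x * (Real.sqrt σ * ‖x‖) - Real.sqrt σ * ‖x‖
        = Real.sqrt σ * ‖x‖ * (φ x - 1) := by ring
    calc φ x * (Real.sqrt σ * ‖x‖) - Real.sqrt σ * ‖x‖
        = Real.sqrt σ * ‖x‖ * (φ x - 1) := h1
      _ ≤ Real.sqrt σ * ‖x‖ * |φ x - 1| :=
        mul_le_mul_of_nonneg_left (le_abs_self _) (by positivity)
  have hFp_bound : ∫ x, Real.sqrt σ * ‖x‖ ∂p ≤ Real.sqrt (A * 1) := by
    apply aux_amgm hA0 zero_le_one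
    intro s hs
    have hg1 : Integrable (fun x => s * (σ * ‖x‖ ^ 2) / 2) p :=
      ((hM2p.const_mul σ).const_mul s).div_const 2
    have hg2 : Integrable (fun x : EuclideanSpace ℝ (Fin d) => 1 / (2 * s)) p :=
      integrable_const _
    have hpt : ∀ x : EuclideanSpace ℝ (Fin d),
        Real.sqrt σ * ‖x‖ ≤ s * (σ * ‖x‖ ^ 2) / 2 + 1 / (2 * s) := by
      intro x
      apply aux_pt (by positivity) (by positivity) zero_le_one hs
      rw [hsqF x, mul_one]
    have hg12 : Integrable (fun x => s * (σ * ‖x‖ ^ 2) / 2 + 1 / (2 * s)) p := hg1.add hg2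
    have h2 := integral_mono (hM1p.const_mul (Real.sqrt σ)) hg12 hpt
    rw [integral_add hg1 hg2, integral_div, integral_const_mul s, hGA] at h2
    simp only [integral_const, measure_univ, probReal_univ, ENNReal.toReal_one, one_smul, smul_eq_mul,
      one_mul] at h2
    exact h2
  have key1 : Real.sqrt σ * ((∫ x, ‖x‖ ∂p) - ∫ x, ‖x‖ ∂ν)
      ≤ Real.sqrt (2 * (1 + L) * H) := by
    rcases le_or_gt H 3 with h3 | h3
    · refine (hΔ1.trans hIw).trans (Real.sqrt_le_sqrt ?_)
      nlinarith [hAL, hBL, hH0, hL0, h3]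
    · have hm : 0 ≤ ∫ x, ‖x‖ ∂ν := integral_nonneg fun x => norm_nonneg x
      have h9 : Real.sqrt σ * ((∫ x, ‖x‖ ∂p) - ∫ x, ‖x‖ ∂ν)
          ≤ ∫ x, Real.sqrt σ * ‖x‖ ∂p := by
        rw [integral_const_mul]
        have h9' : (∫ x, ‖x‖ ∂p) - ∫ x, ‖x‖ ∂ν ≤ ∫ x, ‖x‖ ∂p := by linarith
        exact mul_le_mul_of_nonneg_left h9' (Real.sqrt_nonneg σ)
      refine (h9.trans hFp_bound).trans (Real.sqrt_le_sqrt ?_)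
      rw [mul_one]
      nlinarith [hAL, mul_nonneg hL0 (show (0:ℝ) ≤ 2 * H - 1 by linarith)]
  have goal1 : (∫ x, ‖x‖ ∂p) ≤ (∫ x, ‖x‖ ∂ν)
      + Real.sqrt (2 / σ * (1 + L)) * Real.sqrt H := by
    have h2L : (0:ℝ) ≤ 2 * (1 + L) * H := by nlinarith [hL0, hH0]
    have hrw : Real.sqrt (2 / σ * (1 + L)) * Real.sqrt H
        = Real.sqrt (2 * (1 + L) * H) / Real.sqrt σ := by
      rw [← Real.sqrt_mul (by nlinarith [hL0, div_nonneg (by norm_num : (0:ℝ) ≤ 2) hσ.le] :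
        (0:ℝ) ≤ 2 / σ * (1 + L)) H, ← Real.sqrt_div h2L σ]
      congr 1
      field_simp
    rw [hrw, ← sub_le_iff_le_add']
    rw [le_div_iff₀ hσ']
    have hc : ((∫ x, ‖x‖ ∂p) - ∫ x, ‖x‖ ∂ν) * Real.sqrt σ
        = Real.sqrt σ * ((∫ x, ‖x‖ ∂p) - ∫ x, ‖x‖ ∂ν) := mul_comm _ _
    linarith [key1, hc]
  have goal2 : (∫ x, ‖x‖ ^ 2 ∂p) ≤ (∫ x, ‖x‖ ^ 2 ∂ν)
      + (3 / σ + 2 / σ * Z) * (Real.sqrt H + H / 2) := by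
    have h7 : (3 / σ + 2 / σ * Z) * (Real.sqrt H + H / 2)
        = (3 + 2 * Z) * (Real.sqrt H + H / 2) / σ := by
      rw [eq_div_iff hσ.ne']
      field_simp
    rw [h7, ← sub_le_iff_le_add', le_div_iff₀ hσ]
    have hc2 : ((∫ x, ‖x‖ ^ 2 ∂p) - ∫ x, ‖x‖ ^ 2 ∂ν) * σ = A - B := by
      rw [hAdef, hBdef]; ring
    linarith [goal2σ, hc2]
  exact ⟨goal1, goal2⟩
end

section
/- Fix a₀ > 0, T > 0, β ∈ (0, ∞), and the function G(α, 2) as above (positive, non-decreasing, continuous, bounded by 2/β on (−1/T, ∞)). Then the fixed-point equation α = a₀ − 1/T + G(α, 2)/(2T²) admits at least one solution α̅ in the interval (a₀ − 1/T, a₀ − 1/T + 1/(βT²)], and a₀ − 1/T is not in the closure of the solution set. -/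
open Real Set Filter

/-- Existence of a fixed point for `α = a₀ − 1/T + G(α)/(2T²)` in
`(a₀ − 1/T, a₀ − 1/T + 1/(βT²)]`, where `G` is positive, non-decreasing,
continuous and bounded by `2/β` on `(−1/T, ∞)`; moreover `a₀ − 1/T` is not in
the closure of the set of solutions. -/
theorem fixed_point_exists (a₀ T β : ℝ) (ha₀ : 0 < a₀) (hT : 0 < T) (hβ : 0 < β)
    (G : ℝ → ℝ)
    (hGpos : ∀ α : ℝ, -1 / T < α → 0 < G α)
    (hGmono : MonotoneOn G (Ioi (-1 / T)))
    (hGcont : ContinuousOn G (Ioi (-1 / T)))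
    (hGbdd : ∀ α : ℝ, -1 / T < α → G α ≤ 2 / β) :
    (∃ α : ℝ, α ∈ Ioc (a₀ - 1 / T) (a₀ - 1 / T + 1 / (β * T ^ 2)) ∧
      α = a₀ - 1 / T + G α / (2 * T ^ 2)) ∧
    (a₀ - 1 / T) ∉
      closure {α : ℝ | -1 / T < α ∧ α = a₀ - 1 / T + G α / (2 * T ^ 2)} := by
  set c : ℝ := a₀ - 1 / T with hc
  have hT2 : (0 : ℝ) < 2 * T ^ 2 := by positivity
  have hcI : -1 / T < c := by
    have : (0:ℝ) < 1 / T := by positivity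
    simp only [hc]
    have : -1 / T = -(1 / T) := by ring
    rw [this]; linarith
  set b : ℝ := c + 1 / (β * T ^ 2) with hb
  have hcb : c ≤ b := by
    have h : (0:ℝ) < 1 / (β * T ^ 2) := by positivity
    rw [hb]; linarith
  have hsub : Icc c b ⊆ Ioi (-1 / T) := fun x hx => lt_of_lt_of_le hcI hx.1
  -- continuity of f := α - G α / (2T²)
  have hfc : ContinuousOn (fun α => α - G α / (2 * T ^ 2)) (Icc c b) :=
    continuousOn_id.sub ((hGcont.mono hsub).div_const _)
  have hGc : 0 < G c := hGpos c hcI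
  have hGb : G b ≤ 2 / β := hGbdd b (hsub (right_mem_Icc.2 hcb))
  have hmem : c ∈ Icc ((fun α => α - G α / (2 * T ^ 2)) c)
      ((fun α => α - G α / (2 * T ^ 2)) b) := by
    constructor
    · have : 0 < G c / (2 * T ^ 2) := by positivity
      simp only; linarith
    · simp only
      have h1 : G b / (2 * T ^ 2) ≤ (2 / β) / (2 * T ^ 2) :=
        div_le_div_of_nonneg_right hGb hT2.le
      have h2 : (2 / β) / (2 * T ^ 2) = 1 / (β * T ^ 2) := by
        field_simp
      rw [hb]; linarith [h1.trans_eq h2]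
  obtain ⟨α, hαmem, hαeq⟩ := intermediate_value_Icc hcb hfc hmem
  simp only at hαeq
  have hαI : -1 / T < α := hsub hαmem
  have hαfix : α = c + G α / (2 * T ^ 2) := by linarith
  have hαgt : c < α := by
    have hp : 0 < G α := hGpos α hαI
    have : 0 < G α / (2 * T ^ 2) := div_pos hp hT2
    linarith
  refine ⟨⟨α, ⟨hαgt, hαmem.2⟩, hαfix⟩, ?_⟩
  -- closure part: solution set ⊆ Ici (c + G c / (2T²))
  have hδ : 0 < G c / (2 * T ^ 2) := by positivity
  have hsubset : {α : ℝ | -1 / T < α ∧ α = c + G α / (2 * T ^ 2)} ⊆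
      Ici (c + G c / (2 * T ^ 2)) := by
    rintro x ⟨hxI, hxeq⟩
    have hxpos : 0 < G x := hGpos x hxI
    have hxgt : c ≤ x := by
      have : 0 < G x / (2 * T ^ 2) := by positivity
      linarith
    have hGcx : G c ≤ G x := hGmono hcI hxI hxgt
    have : G c / (2 * T ^ 2) ≤ G x / (2 * T ^ 2) :=
      div_le_div_of_nonneg_right hGcx hT2.le
    simp only [mem_Ici]; linarith
  intro hmem'
  have hle : c + G c / (2 * T ^ 2) ≤ c := by
    have h := closure_mono hsubset hmem'
    rw [isClosed_Ici.closure_eq] at h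
    exact h
  linarith
end

section
/- Let g̃ ∈ 𝒢̃ with g̃'(0) > 0, let α > 0, set R := ‖g̃‖_∞ (1/g̃'(0) + 2/α), and define f(r) = g̃(r) for r ≤ R and f(r) = g̃(R) + g̃'(R)(r − R) for r > R. Then f is C¹ on (0,∞), non-decreasing, concave, satisfies f(0⁺) = 0, and obeys the two-sided linear bounds g̃'(R) r ≤ f(r) ≤ g̃'(0) r and g̃'(R) ≤ f'(r) ≤ g̃'(0) for all r > 0. -/
open Real Set Filter

/-- Linear extension of `g̃ ∈ 𝒢̃` beyond `R = ‖g̃‖_∞(1/g̃'(0) + 2/α)`: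
the function `f(r) = g̃(r)` for `r ≤ R`, `f(r) = g̃(R) + g̃'(R)(r−R)` for `r > R`,
is `C¹` on `(0,∞)`, non-decreasing, concave, vanishes at `0⁺`, and satisfies
`g̃'(R)·r ≤ f(r) ≤ g̃'(0)·r` and `g̃'(R) ≤ f'(r) ≤ g̃'(0)` for all `r > 0`. -/
theorem linear_extension_properties
    (g : ℝ → ℝ) (M L0 α : ℝ) (hα : 0 < α)
    (hgC2 : ContDiffOn ℝ 2 g (Ioi 0))
    (hg_nonneg : ∀ r : ℝ, 0 < r → 0 ≤ g r)
    (hg0 : Tendsto g (nhdsWithin 0 (Ioi 0)) (nhds 0))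
    (hg' : ∀ r : ℝ, 0 < r → 0 ≤ deriv g r)
    (hg'' : ∀ r : ℝ, 0 < r → 2 * deriv (deriv g) r + g r * deriv g r ≤ 0)
    (hM : IsLUB (g '' Ioi 0) M)
    (hL0 : Tendsto (deriv g) (nhdsWithin 0 (Ioi 0)) (nhds L0)) (hL0pos : 0 < L0)
    (R : ℝ) (hR : R = M * (1 / L0 + 2 / α))
    (f : ℝ → ℝ)
    (hf : ∀ r : ℝ, f r = if r ≤ R then g r else g R + deriv g R * (r - R)) :
    ContDiffOn ℝ 1 f (Ioi 0) ∧
    MonotoneOn f (Ioi 0) ∧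
    ConcaveOn ℝ (Ioi 0) f ∧
    Tendsto f (nhdsWithin 0 (Ioi 0)) (nhds 0) ∧
    (∀ r : ℝ, 0 < r →
      deriv g R * r ≤ f r ∧ f r ≤ L0 * r ∧
      deriv g R ≤ deriv f r ∧ deriv f r ≤ L0) := by
  have hIoi : IsOpen (Ioi (0:ℝ)) := isOpen_Ioi
  have hdg_cont : ContinuousOn (deriv g) (Ioi 0) :=
    hgC2.continuousOn_deriv_of_isOpen hIoi (by norm_num)
  have hgdiff : ∀ r : ℝ, 0 < r → HasDerivAt g (deriv g r) r := fun r hr =>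
    ((hgC2.differentiableOn (by norm_num)).differentiableAt (hIoi.mem_nhds hr)).hasDerivAt
  -- M is positive
  have hMpos : 0 < M := by
    by_contra h
    push_neg at h
    have hg_zero : ∀ r : ℝ, 0 < r → g r = 0 := fun r hr =>
      le_antisymm ((hM.1 ⟨r, hr, rfl⟩).trans h) (hg_nonneg r hr)
    have hdz : ∀ r : ℝ, 0 < r → deriv g r = 0 := by
      intro r hr
      have : deriv g r = deriv (fun _ => (0:ℝ)) r := by
        apply Filter.EventuallyEq.deriv_eq
        filter_upwards [hIoi.mem_nhds hr] with x hx using hg_zero x hx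
      simpa using this
    have hz : Tendsto (deriv g) (nhdsWithin 0 (Ioi 0)) (nhds 0) := by
      apply Tendsto.congr' _ tendsto_const_nhds
      filter_upwards [self_mem_nhdsWithin] with x hx using (hdz x hx).symm
    have := tendsto_nhds_unique hL0 hz
    linarith
  have hRpos : 0 < R := by
    rw [hR]
    exact mul_pos hMpos (add_pos (one_div_pos.mpr hL0pos) (div_pos two_pos hα))
  -- deriv g is antitone on Ioi 0
  have hanti : AntitoneOn (deriv g) (Ioi 0) := by
    apply antitoneOn_of_deriv_nonpos (convex_Ioi 0) hdg_cont
    · rw [interior_Ioi]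
      exact (hgC2.deriv_of_isOpen (m := 1) hIoi (by norm_num)).differentiableOn (by norm_num)
    · rw [interior_Ioi]
      intro x hx
      nlinarith [hg'' x hx, hg_nonneg x hx, hg' x hx]
  -- deriv g ≤ L0 on Ioi 0
  have hle : ∀ r : ℝ, 0 < r → deriv g r ≤ L0 := by
    intro r hr
    refine ge_of_tendsto hL0 ?_
    filter_upwards [Ioo_mem_nhdsGT_of_mem (⟨le_refl 0, hr⟩ : (0:ℝ) ∈ Ico 0 r)] with s hs
    exact hanti hs.1 hr hs.2.le
  -- basic descriptions of f
  have hfg : ∀ x : ℝ, x ≤ R → f x = g x := fun x hx => by rw [hf, if_pos hx]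
  have hfl : ∀ x : ℝ, R ≤ x → f x = g R + deriv g R * (x - R) := by
    intro x hx
    rcases eq_or_lt_of_le hx with h | h
    · rw [← h, hf, if_pos le_rfl]; ring
    · rw [hf, if_neg (not_le.mpr h)]
  have hline : ∀ x : ℝ, HasDerivAt (fun y => g R + deriv g R * (y - R)) (deriv g R) x := by
    intro x
    have := (((hasDerivAt_id x).sub_const R).const_mul (deriv g R)).const_add (g R)
    simpa using this
  -- derivative of f
  have hf' : ∀ r : ℝ, 0 < r → HasDerivAt f (deriv g (min r R)) r := by
    intro r hr
    rcases lt_trichotomy r R with h | h | h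
    · rw [min_eq_left h.le]
      refine (hgdiff r hr).congr_of_eventuallyEq ?_
      filter_upwards [Iio_mem_nhds h] with x hx using hfg x hx.le
    · subst h
      rw [min_self]
      have h1 : HasDerivWithinAt f (deriv g r) (Iic r) r :=
        ((hgdiff r hr).hasDerivWithinAt).congr (fun x hx => hfg x hx) (hfg r le_rfl)
      have h2 : HasDerivWithinAt f (deriv g r) (Ici r) r :=
        ((hline r).hasDerivWithinAt).congr (fun x hx => hfl x hx) (hfl r le_rfl)
      have h3 := h1.union h2
      rw [Iic_union_Ici] at h3
      exact hasDerivWithinAt_univ.mp h3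
    · rw [min_eq_right h.le]
      refine (hline r).congr_of_eventuallyEq ?_
      filter_upwards [Ioi_mem_nhds h] with x hx using hfl x hx.le
  have hderivf : ∀ r : ℝ, 0 < r → deriv f r = deriv g (min r R) := fun r hr => (hf' r hr).deriv
  have hdiff_f : DifferentiableOn ℝ f (Ioi 0) := fun r hr =>
    (hf' r hr).differentiableAt.differentiableWithinAt
  have hcont_f : ContinuousOn f (Ioi 0) := hdiff_f.continuousOn
  have hcont_df : ContinuousOn (deriv f) (Ioi 0) := by
    have h1 : ContinuousOn (fun r => deriv g (min r R)) (Ioi 0) :=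
      hdg_cont.comp ((continuous_id.min continuous_const).continuousOn)
        (fun r hr => lt_min hr hRpos)
    exact h1.congr (fun r hr => hderivf r hr)
  -- C¹
  have hC1 : ContDiffOn ℝ 1 f (Ioi 0) := by
    rw [show (1 : WithTop ℕ∞) = 0 + 1 from rfl, contDiffOn_succ_iff_deriv_of_isOpen hIoi]
    refine ⟨hdiff_f, by simp, contDiffOn_zero.mpr hcont_df⟩
  -- monotone
  have hdf_nonneg : ∀ x ∈ interior (Ioi (0:ℝ)), 0 ≤ deriv f x := by
    rw [interior_Ioi]
    intro x hx
    rw [hderivf x hx]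
    exact hg' _ (lt_min hx hRpos)
  have hdiff_f' : DifferentiableOn ℝ f (interior (Ioi (0:ℝ))) := by
    rw [interior_Ioi]; exact hdiff_f
  have hmono : MonotoneOn f (Ioi 0) :=
    monotoneOn_of_deriv_nonneg (convex_Ioi 0) hcont_f hdiff_f' hdf_nonneg
  -- concave
  have hconc : ConcaveOn ℝ (Ioi 0) f := by
    refine AntitoneOn.concaveOn_of_deriv (convex_Ioi 0) hcont_f hdiff_f' ?_
    rw [interior_Ioi]
    intro x hx y hy hxy
    rw [hderivf x hx, hderivf y hy]
    exact hanti (lt_min hx hRpos) (lt_min hy hRpos) (min_le_min hxy le_rfl)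
  -- limit at 0⁺
  have htend : Tendsto f (nhdsWithin 0 (Ioi 0)) (nhds 0) := by
    apply hg0.congr'
    filter_upwards [Ioo_mem_nhdsGT_of_mem (⟨le_refl 0, hRpos⟩ : (0:ℝ) ∈ Ico 0 R)] with x hx
    exact (hfg x hx.2.le).symm
  -- derivative bounds
  have hdfR : ∀ r : ℝ, 0 < r → deriv g R ≤ deriv f r := by
    intro r hr
    rw [hderivf r hr]
    exact hanti (lt_min hr hRpos) hRpos (min_le_right r R)
  have hdfL : ∀ r : ℝ, 0 < r → deriv f r ≤ L0 := by
    intro r hr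
    rw [hderivf r hr]
    exact hle _ (lt_min hr hRpos)
  -- two-sided MVT bounds
  have hlow := (convex_Ioi (0:ℝ)).mul_sub_le_image_sub_of_le_deriv hcont_f hdiff_f'
    (by rw [interior_Ioi]; exact fun x hx => hdfR x hx)
  have hupp := (convex_Ioi (0:ℝ)).image_sub_le_mul_sub_of_deriv_le hcont_f hdiff_f'
    (by rw [interior_Ioi]; exact fun x hx => hdfL x hx)
  refine ⟨hC1, hmono, hconc, htend, fun r hr => ?_⟩
  have hlowr : deriv g R * r ≤ f r := by
    have h1 : Tendsto (fun t : ℝ => deriv g R * (r - t) - (f r - f t))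
        (nhdsWithin 0 (Ioi 0)) (nhds (deriv g R * r - f r)) := by
      have ha : Tendsto (fun t : ℝ => deriv g R * (r - t)) (nhdsWithin (0:ℝ) (Ioi 0))
          (nhds (deriv g R * (r - 0))) :=
        ((continuous_const.mul (continuous_const.sub continuous_id)).tendsto 0).mono_left
          nhdsWithin_le_nhds
      have hb : Tendsto (fun t : ℝ => f r - f t) (nhdsWithin (0:ℝ) (Ioi 0)) (nhds (f r - 0)) :=
        tendsto_const_nhds.sub htend
      have := ha.sub hb
      simpa using this
    have h2 : deriv g R * r - f r ≤ 0 := by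
      refine le_of_tendsto h1 ?_
      filter_upwards [Ioo_mem_nhdsGT_of_mem (⟨le_refl 0, hr⟩ : (0:ℝ) ∈ Ico 0 r)] with t ht
      have := hlow t ht.1 r hr ht.2.le
      linarith
    linarith
  have huppr : f r ≤ L0 * r := by
    have h1 : Tendsto (fun t : ℝ => (f r - f t) - L0 * (r - t))
        (nhdsWithin 0 (Ioi 0)) (nhds (f r - L0 * r)) := by
      have ha : Tendsto (fun t : ℝ => L0 * (r - t)) (nhdsWithin (0:ℝ) (Ioi 0))
          (nhds (L0 * (r - 0))) :=
        ((continuous_const.mul (continuous_const.sub continuous_id)).tendsto 0).mono_left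
          nhdsWithin_le_nhds
      have hb : Tendsto (fun t : ℝ => f r - f t) (nhdsWithin (0:ℝ) (Ioi 0)) (nhds (f r - 0)) :=
        tendsto_const_nhds.sub htend
      have := hb.sub ha
      simpa using this
    have h2 : f r - L0 * r ≤ 0 := by
      refine le_of_tendsto h1 ?_
      filter_upwards [Ioo_mem_nhdsGT_of_mem (⟨le_refl 0, hr⟩ : (0:ℝ) ∈ Ico 0 r)] with t ht
      have := hupp t ht.1 r hr ht.2.le
      linarith
    linarith
  exact ⟨hlowr, huppr, hdfR r hr, hdfL r hr⟩
end

section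
/- With f as in the previous construction (linear extension of g̃ ∈ 𝒢̃ beyond R = ‖g̃‖_∞(1/g̃'(0) + 2/α)), suppose additionally κ_U(r) ≥ α − g̃(r)/r for all r > 0. Then for every r ∈ (0, R) ∪ (R, ∞): 2f''(r) − (r/2) f'(r) κ_U(r) ≤ −λ f(r), where λ := (g̃'(R)/2)(α/g̃'(0) + 1). -/
open Real Set Filter

/-- The key differential inequality for the linear extension `f` of `g̃ ∈ 𝒢̃`:
if `κ_U(r) ≥ α − g̃(r)/r` for all `r > 0`, then for all
`r ∈ (0, R) ∪ (R, ∞)`, `2f''(r) − (r/2) f'(r) κ_U(r) ≤ −λ f(r)`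
with `λ = (g̃'(R)/2)(α/g̃'(0) + 1)` and `R = ‖g̃‖_∞(1/g̃'(0) + 2/α)`. -/
theorem linear_extension_diff_ineq
    (g : ℝ → ℝ) (M L0 α : ℝ) (hα : 0 < α)
    (hgC2 : ContDiffOn ℝ 2 g (Ioi 0))
    (hg_nonneg : ∀ r : ℝ, 0 < r → 0 ≤ g r)
    (hg0 : Tendsto g (nhdsWithin 0 (Ioi 0)) (nhds 0))
    (hg' : ∀ r : ℝ, 0 < r → 0 ≤ deriv g r)
    (hg'' : ∀ r : ℝ, 0 < r → 2 * deriv (deriv g) r + g r * deriv g r ≤ 0)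
    (hM : IsLUB (g '' Ioi 0) M)
    (hL0 : Tendsto (deriv g) (nhdsWithin 0 (Ioi 0)) (nhds L0)) (hL0pos : 0 < L0)
    (R : ℝ) (hR : R = M * (1 / L0 + 2 / α))
    (f : ℝ → ℝ)
    (hf : ∀ r : ℝ, f r = if r ≤ R then g r else g R + deriv g R * (r - R))
    (κ : ℝ → ℝ) (hκ : ∀ r : ℝ, 0 < r → α - g r / r ≤ κ r)
    (lam : ℝ) (hlam : lam = (deriv g R / 2) * (α / L0 + 1)) :
    ∀ r : ℝ, 0 < r → r ≠ R →
      2 * deriv (deriv f) r - (r / 2) * deriv f r * κ r ≤ -lam * f r := by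
  -- basic regularity facts
  have hg1 : ContDiffOn ℝ 1 (deriv g) (Ioi 0) :=
    hgC2.deriv_of_isOpen isOpen_Ioi (by norm_num)
  have hdg : ∀ x : ℝ, 0 < x → DifferentiableAt ℝ g x := fun x hx =>
    (hgC2.contDiffAt (isOpen_Ioi.mem_nhds hx)).differentiableAt (by norm_num)
  have hdg' : ∀ x : ℝ, 0 < x → DifferentiableAt ℝ (deriv g) x := fun x hx =>
    (hg1.contDiffAt (isOpen_Ioi.mem_nhds hx)).differentiableAt (by norm_num)
  have hcontg : ContinuousOn g (Ioi 0) := hgC2.continuousOn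
  have hcontg' : ContinuousOn (deriv g) (Ioi 0) := hg1.continuousOn
  -- the derivative of g is antitone on (0,∞)
  have hanti : AntitoneOn (deriv g) (Ioi 0) := by
    apply antitoneOn_of_deriv_nonpos (convex_Ioi 0) hcontg'
    · intro s hs
      rw [interior_Ioi] at hs
      exact (hdg' s hs).differentiableWithinAt
    · intro s hs
      rw [interior_Ioi] at hs
      have h1 := hg'' s hs
      have h2 : 0 ≤ g s * deriv g s := mul_nonneg (hg_nonneg s hs) (hg' s hs)
      linarith
  -- the sup bound
  have hMub : ∀ x : ℝ, 0 < x → g x ≤ M := fun x hx => hM.1 ⟨x, hx, rfl⟩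
  -- M is positive
  have hMpos : 0 < M := by
    by_contra hc
    push_neg at hc
    have hz : ∀ x ∈ Ioi (0:ℝ), g x = (0:ℝ) := fun x hx =>
      le_antisymm (le_trans (hMub x hx) hc) (hg_nonneg x hx)
    have hz' : ∀ᶠ x in nhdsWithin (0:ℝ) (Ioi 0), deriv g x = 0 := by
      filter_upwards [self_mem_nhdsWithin] with x hx
      have hev : g =ᶠ[nhds x] (fun _ => (0:ℝ)) := by
        filter_upwards [isOpen_Ioi.mem_nhds hx] with y hy
        exact hz y hy
      rw [hev.deriv_eq]
      simp
    have hten : Tendsto (deriv g) (nhdsWithin (0:ℝ) (Ioi 0)) (nhds 0) :=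
      Tendsto.congr' (hz'.mono fun x h => h.symm) tendsto_const_nhds
    have := tendsto_nhds_unique hL0 hten
    linarith
  have hRpos : 0 < R := by
    rw [hR]
    have : 0 < 1 / L0 + 2 / α := by positivity
    exact mul_pos hMpos this
  have hb0 : 0 ≤ deriv g R := hg' R hRpos
  -- deriv g ≤ L0 everywhere on (0,∞)
  have hL0le : ∀ x : ℝ, 0 < x → deriv g x ≤ L0 := by
    intro x hx
    refine ge_of_tendsto hL0 ?_
    filter_upwards [Ioo_mem_nhdsGT_of_mem (⟨le_refl (0:ℝ), hx⟩ : (0:ℝ) ∈ Ico 0 x)] with s hs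
    exact hanti (mem_Ioi.mpr hs.1) (mem_Ioi.mpr hx) hs.2.le
  -- g x ≤ L0 * x
  have hgle : ∀ x : ℝ, 0 < x → g x ≤ L0 * x := by
    intro x hx
    have hmono : MonotoneOn (fun s => L0 * s - g s) (Ioi 0) := by
      apply monotoneOn_of_deriv_nonneg (convex_Ioi 0)
      · exact ((continuous_const.mul continuous_id).continuousOn).sub hcontg
      · intro s hs
        rw [interior_Ioi] at hs
        exact (((differentiableAt_id.const_mul L0)).sub (hdg s hs)).differentiableWithinAt
      · intro s hs
        rw [interior_Ioi] at hs
        have hd : HasDerivAt (fun s => L0 * s - g s) (L0 * 1 - deriv g s) s :=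
          ((hasDerivAt_id s).const_mul L0).sub (hdg s hs).hasDerivAt
        rw [hd.deriv]
        have := hL0le s hs
        linarith
    have hlim : Tendsto (fun s => L0 * s - g s) (nhdsWithin (0:ℝ) (Ioi 0)) (nhds 0) := by
      have h1 : Tendsto (fun s : ℝ => L0 * s) (nhdsWithin (0:ℝ) (Ioi 0)) (nhds (L0 * 0)) :=
        ((continuous_const.mul continuous_id).tendsto 0).mono_left nhdsWithin_le_nhds
      have := h1.sub hg0
      simpa using this
    have h0 : (0:ℝ) ≤ L0 * x - g x := by
      have := le_of_tendsto hlim (by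
        filter_upwards [Ioo_mem_nhdsGT_of_mem (⟨le_refl (0:ℝ), hx⟩ : (0:ℝ) ∈ Ico 0 x)] with s hs
        exact hmono (mem_Ioi.mpr hs.1) (mem_Ioi.mpr hx) hs.2.le)
      simpa using this
    linarith
  -- deriv g R * R ≤ g R
  have hbR : deriv g R * R ≤ g R := by
    have hmono : MonotoneOn (fun s => g s - deriv g R * s) (Ioc 0 R) := by
      apply monotoneOn_of_deriv_nonneg (convex_Ioc 0 R)
      · exact (hcontg.mono (fun s hs => hs.1)).sub
          ((continuous_const.mul continuous_id).continuousOn)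
      · intro s hs
        rw [interior_Ioc] at hs
        exact ((hdg s hs.1).sub (differentiableAt_id.const_mul _)).differentiableWithinAt
      · intro s hs
        rw [interior_Ioc] at hs
        have hd : HasDerivAt (fun s => g s - deriv g R * s) (deriv g s - deriv g R * 1) s :=
          (hdg s hs.1).hasDerivAt.sub ((hasDerivAt_id s).const_mul (deriv g R))
        rw [hd.deriv]
        have := hanti (mem_Ioi.mpr hs.1) (mem_Ioi.mpr hRpos) hs.2.le
        linarith
    have hlim : Tendsto (fun s => g s - deriv g R * s) (nhdsWithin (0:ℝ) (Ioi 0)) (nhds 0) := by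
      have h1 : Tendsto (fun s : ℝ => deriv g R * s) (nhdsWithin (0:ℝ) (Ioi 0))
          (nhds (deriv g R * 0)) :=
        ((continuous_const.mul continuous_id).tendsto 0).mono_left nhdsWithin_le_nhds
      have := hg0.sub h1
      simpa using this
    have h0 : (0:ℝ) ≤ g R - deriv g R * R := by
      have := le_of_tendsto hlim (by
        filter_upwards [Ioo_mem_nhdsGT_of_mem (⟨le_refl (0:ℝ), hRpos⟩ : (0:ℝ) ∈ Ico 0 R)] with s hs
        exact hmono ⟨hs.1, hs.2.le⟩ ⟨hRpos, le_refl R⟩ hs.2.le)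
      simpa using this
    linarith
  have hgRM : g R ≤ M := hMub R hRpos
  have hRLα : R * L0 * α = M * (α + 2 * L0) := by
    rw [hR]
    field_simp
  have hbLα : deriv g R * (α + L0) ≤ L0 * α := by
    have h1 : deriv g R * R * (α + L0) ≤ M * (α + 2 * L0) := by
      have hbRM : deriv g R * R ≤ M := hbR.trans hgRM
      linarith [mul_le_mul_of_nonneg_right hbRM (by linarith : (0:ℝ) ≤ α + L0),
        mul_nonneg hMpos.le hL0pos.le]
    have h2 : deriv g R * (α + L0) * R ≤ (L0 * α) * R := by linarith [h1, hRLα]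
    exact le_of_mul_le_mul_right h2 hRpos
  have hlam2 : lam * (2 * L0) = deriv g R * (α + L0) := by
    rw [hlam]
    field_simp
  intro r hr hrR
  rcases lt_or_gt_of_ne hrR with hlt | hgt
  · -- case r < R : f coincides with g near r
    have hfg : f =ᶠ[nhds r] g := by
      filter_upwards [Iio_mem_nhds hlt] with x hx
      rw [hf x, if_pos (le_of_lt hx)]
    have d1 : deriv f r = deriv g r := hfg.deriv_eq
    have d2 : deriv (deriv f) r = deriv (deriv g) r := (hfg.deriv).deriv_eq
    have hfr : f r = g r := by rw [hf r, if_pos hlt.le]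
    rw [d1, d2, hfr]
    have h1 := hg'' r hr
    have h2 : α * r - g r ≤ κ r * r := by
      have h := mul_le_mul_of_nonneg_right (hκ r hr) hr.le
      rw [sub_mul, div_mul_cancel₀ _ (ne_of_gt hr)] at h
      linarith
    have h3 : 0 ≤ deriv g r := hg' r hr
    have h4 : deriv g R ≤ deriv g r := hanti (mem_Ioi.mpr hr) (mem_Ioi.mpr hRpos) hlt.le
    have h5 : g r ≤ L0 * r := hgle r hr
    have h6 : 0 ≤ g r := hg_nonneg r hr
    have key : lam * g r ≤ (g r * deriv g r) / 2 + (α * r * deriv g r) / 2 := by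
      have e1 : deriv g R * g r ≤ deriv g r * g r := mul_le_mul_of_nonneg_right h4 h6
      have e2 : g r * (α * deriv g r) ≤ (L0 * r) * (α * deriv g r) :=
        mul_le_mul_of_nonneg_right h5 (mul_nonneg hα.le h3)
      have hmain : deriv g R * (α + L0) * g r ≤
          ((g r * deriv g r) / 2 + (α * r * deriv g r) / 2) * (2 * L0) := by
        linarith [mul_le_mul_of_nonneg_left e1 hα.le, mul_le_mul_of_nonneg_left e1 hL0pos.le, e2]
      refine le_of_mul_le_mul_right ?_ (show (0:ℝ) < 2 * L0 by linarith)
      calc lam * g r * (2 * L0) = (lam * (2 * L0)) * g r := by ring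
        _ = deriv g R * (α + L0) * g r := by rw [hlam2]
        _ ≤ ((g r * deriv g r) / 2 + (α * r * deriv g r) / 2) * (2 * L0) := hmain
    have step2 : deriv g r * (α * r - g r) ≤ deriv g r * (κ r * r) :=
      mul_le_mul_of_nonneg_left h2 h3
    linarith [h1, step2, key]
  · -- case r > R : f is affine near r
    have hfA : f =ᶠ[nhds r] (fun x => g R + deriv g R * (x - R)) := by
      filter_upwards [Ioi_mem_nhds hgt] with x hx
      rw [hf x, if_neg (not_le.mpr hx)]
    have hAderiv : ∀ x : ℝ, deriv (fun y => g R + deriv g R * (y - R)) x = deriv g R := by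
      intro x
      have h : HasDerivAt (fun y => g R + deriv g R * (y - R)) (deriv g R) x := by
        simpa using (((hasDerivAt_id x).sub_const R).const_mul (deriv g R)).const_add (g R)
      exact h.deriv
    have d1 : deriv f r = deriv g R := by rw [hfA.deriv_eq, hAderiv r]
    have d2 : deriv (deriv f) r = 0 := by
      have h2 : deriv f =ᶠ[nhds r] fun _ => deriv g R :=
        (hfA.deriv).trans (by filter_upwards with x; exact hAderiv x)
      rw [h2.deriv_eq, deriv_const]
    have hfr : f r = g R + deriv g R * (r - R) := by rw [hf r, if_neg (not_le.mpr hgt)]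
    rw [d1, d2, hfr]
    have hκ' : α * r - M ≤ r * κ r := by
      have h := mul_le_mul_of_nonneg_right (hκ r hr) hr.le
      rw [sub_mul, div_mul_cancel₀ _ (ne_of_gt hr)] at h
      have hgM := hMub r hr
      linarith [h]
    have key : deriv g R * (α + L0) * (g R + deriv g R * (r - R)) ≤
        deriv g R * L0 * (α * r - M) := by
      have e1 : deriv g R * (α + L0) * g R ≤ deriv g R * (α + L0) * M :=
        mul_le_mul_of_nonneg_left hgRM (mul_nonneg hb0 (by linarith))
      have e2 : (deriv g R * (α + L0)) * (deriv g R * (r - R)) ≤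
          (L0 * α) * (deriv g R * (r - R)) :=
        mul_le_mul_of_nonneg_right hbLα (mul_nonneg hb0 (by linarith))
      have e3 : deriv g R * (R * L0 * α) = deriv g R * (M * (α + 2 * L0)) := by rw [hRLα]
      linarith [e1, e2, e3]
    have step : lam * (g R + deriv g R * (r - R)) ≤ (deriv g R / 2) * (α * r - M) := by
      refine le_of_mul_le_mul_right ?_ (show (0:ℝ) < 2 * L0 by linarith)
      calc lam * (g R + deriv g R * (r - R)) * (2 * L0)
          = (lam * (2 * L0)) * (g R + deriv g R * (r - R)) := by ring
        _ = deriv g R * (α + L0) * (g R + deriv g R * (r - R)) := by rw [hlam2]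
        _ ≤ deriv g R * L0 * (α * r - M) := key
        _ = (deriv g R / 2) * (α * r - M) * (2 * L0) := by ring
    have step3 : (deriv g R / 2) * (α * r - M) ≤ (r / 2) * deriv g R * κ r := by
      have h := mul_le_mul_of_nonneg_left hκ' (by linarith : (0:ℝ) ≤ deriv g R / 2)
      linarith [h]
    linarith [step, step3]
end

section
/- Let V(y) = 1 + |y|², ε > 0, R₂ > 0, and let f : [0,∞) → [0,∞) be non-decreasing, concave, subadditive, with f(0) = 0 and f constant equal to f(R₂) on [R₂, ∞). Then for all y, z, p ∈ ℝᵈ: f(|y − z|)(1 + εV(y) + εV(z)) ≤ C_Δ [ f(|y − p|)(1 + εV(y) + εV(p)) + f(|p − z|)(1 + εV(p) + εV(z)) ], where C_Δ = max{3, 2 + 2R₂²}. -/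
open Real Set

set_option maxHeartbeats 1000000 in
/-- Pointwise weak-triangle inequality for the distorted cost
`f(|y−z|)(1 + εV(y) + εV(z))` with `V(y) = 1 + |y|²`:
for all `y, z, p`, with `C_Δ = max{3, 2 + 2R₂²}`,
`f(|y−z|)(1+εV(y)+εV(z)) ≤ C_Δ [f(|y−p|)(1+εV(y)+εV(p)) + f(|p−z|)(1+εV(p)+εV(z))]`. -/
theorem weak_triangle_pointwise {d : ℕ}
    (V : EuclideanSpace ℝ (Fin d) → ℝ) (hV : ∀ y, V y = 1 + ‖y‖ ^ 2)
    (ε R₂ : ℝ) (hε : 0 < ε) (hR₂ : 0 < R₂)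
    (f : ℝ → ℝ)
    (hf_nonneg : ∀ r : ℝ, 0 ≤ r → 0 ≤ f r)
    (hf_mono : MonotoneOn f (Ici 0))
    (hf_conc : ConcaveOn ℝ (Ici 0) f)
    (hf_subadd : ∀ r s : ℝ, 0 ≤ r → 0 ≤ s → f (r + s) ≤ f r + f s)
    (hf0 : f 0 = 0)
    (hf_const : ∀ r : ℝ, R₂ ≤ r → f r = f R₂) :
    ∀ y z p : EuclideanSpace ℝ (Fin d),
      f ‖y - z‖ * (1 + ε * V y + ε * V z) ≤
        max 3 (2 + 2 * R₂ ^ 2) *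
          (f ‖y - p‖ * (1 + ε * V y + ε * V p)
            + f ‖p - z‖ * (1 + ε * V p + ε * V z)) := by
  intro y z p
  set M : ℝ := max 2 (1 + 2 * R₂ ^ 2) with hM
  have hM2 : (2:ℝ) ≤ M := le_max_left _ _
  have hMR : 1 + 2 * R₂ ^ 2 ≤ M := le_max_right _ _
  have hC : max 3 (2 + 2 * R₂ ^ 2) = 1 + M := by
    rw [hM]
    rcases le_total (2:ℝ) (1 + 2 * R₂ ^ 2) with h | h
    · rw [max_eq_right h, max_eq_right (by linarith : (3:ℝ) ≤ 2 + 2 * R₂ ^ 2)]; ring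
    · rw [max_eq_left h, max_eq_left (by linarith : (2:ℝ) + 2 * R₂ ^ 2 ≤ 3)]; norm_num
  have hVpos : ∀ w : EuclideanSpace ℝ (Fin d), 0 < V w := by
    intro w; rw [hV]; positivity
  have hfR : ∀ r : ℝ, 0 ≤ r → f r ≤ f R₂ := by
    intro r hr
    rcases le_total r R₂ with h | h
    · exact hf_mono (mem_Ici.2 hr) (mem_Ici.2 hR₂.le) h
    · exact (hf_const r h).le
  have haux : ∀ a b : EuclideanSpace ℝ (Fin d), ‖a - b‖ ≤ R₂ → V a ≤ M * V b := by
    intro a b hab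
    have h1 : ‖a‖ ≤ ‖b‖ + R₂ := by
      have := norm_sub_norm_le a b
      linarith
    have h2 : ‖a‖ ^ 2 ≤ (‖b‖ + R₂) ^ 2 := pow_le_pow_left₀ (norm_nonneg a) h1 2
    rw [hV, hV]
    nlinarith [sq_nonneg (‖b‖ - R₂), sq_nonneg ‖b‖, hMR, hM2]
  -- abbreviations
  have ha : 0 ≤ f ‖y - p‖ := hf_nonneg _ (norm_nonneg _)
  have hb : 0 ≤ f ‖p - z‖ := hf_nonneg _ (norm_nonneg _)
  have hc : 0 ≤ f ‖y - z‖ := hf_nonneg _ (norm_nonneg _)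
  have hFyz : (0:ℝ) < 1 + ε * V y + ε * V z := by
    have := hVpos y; have := hVpos z; nlinarith
  have hFyp : (0:ℝ) < 1 + ε * V y + ε * V p := by
    have := hVpos y; have := hVpos p; nlinarith
  have hFpz : (0:ℝ) < 1 + ε * V p + ε * V z := by
    have := hVpos p; have := hVpos z; nlinarith
  have htri : f ‖y - z‖ ≤ f ‖y - p‖ + f ‖p - z‖ := by
    have h1 : ‖y - z‖ ≤ ‖y - p‖ + ‖p - z‖ := by
      have := dist_triangle y p z
      simpa [dist_eq_norm] using this
    calc f ‖y - z‖ ≤ f (‖y - p‖ + ‖p - z‖) := by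
          exact hf_mono (mem_Ici.2 (norm_nonneg _))
            (mem_Ici.2 (by positivity)) h1
      _ ≤ f ‖y - p‖ + f ‖p - z‖ := hf_subadd _ _ (norm_nonneg _) (norm_nonneg _)
  rw [hC]
  have hVp := hVpos p
  have hVy := hVpos y
  have hVz := hVpos z
  have key : ∀ A B C' : ℝ, 0 < A → 0 < B → C' ≤ M * B →
      1 + ε * A + ε * C' ≤ M * (1 + ε * A + ε * B) := by
    intro A B C' hA hB hCB
    have h1 : (0:ℝ) ≤ (M - 1) * (ε * A) :=
      mul_nonneg (by linarith) (mul_nonneg hε.le hA.le)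
    have h2 : ε * C' ≤ ε * (M * B) := mul_le_mul_of_nonneg_left hCB hε.le
    nlinarith
  rcases le_total ‖y - p‖ R₂ with hyp | hyp
  · rcases le_total ‖p - z‖ R₂ with hpz | hpz
    · -- both close: V y ≤ M V p and V z ≤ M V p
      have h1 : V y ≤ M * V p := haux y p hyp
      have h2 : V z ≤ M * V p := haux z p (by rwa [norm_sub_rev])
      have hF1 : 1 + ε * V y + ε * V z ≤ M * (1 + ε * V y + ε * V p) := key _ _ _ hVy hVp h2
      have hF2 : 1 + ε * V y + ε * V z ≤ M * (1 + ε * V p + ε * V z) := by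
        have := key (V z) (V p) (V y) hVz hVp h1
        linarith
      nlinarith [mul_nonneg ha (sub_nonneg.2 hF1), mul_nonneg hb (sub_nonneg.2 hF2),
        mul_le_mul_of_nonneg_right htri hFyz.le,
        mul_nonneg ha hFyp.le, mul_nonneg hb hFpz.le]
    · -- |p - z| ≥ R₂ : f‖y-z‖ ≤ f R₂ = f‖p-z‖, V y ≤ M V p
      have hcb : f ‖y - z‖ ≤ f ‖p - z‖ := by
        rw [hf_const _ hpz]; exact hfR _ (norm_nonneg _)
      have h1 : V y ≤ M * V p := haux y p hyp
      have hF : 1 + ε * V y + ε * V z ≤ M * (1 + ε * V p + ε * V z) := by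
        have := key (V z) (V p) (V y) hVz hVp h1
        linarith
      nlinarith [mul_le_mul_of_nonneg_right hcb hFyz.le,
        mul_nonneg hb (sub_nonneg.2 hF),
        mul_nonneg ha hFyp.le, mul_nonneg hb hFpz.le]
  · have hca : f ‖y - z‖ ≤ f ‖y - p‖ := by
      rw [hf_const _ hyp]; exact hfR _ (norm_nonneg _)
    rcases le_total ‖p - z‖ R₂ with hpz | hpz
    · -- V z ≤ M V p
      have h2 : V z ≤ M * V p := haux z p (by rwa [norm_sub_rev])
      have hF : 1 + ε * V y + ε * V z ≤ M * (1 + ε * V y + ε * V p) := key _ _ _ hVy hVp h2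
      nlinarith [mul_le_mul_of_nonneg_right hca hFyz.le,
        mul_nonneg ha (sub_nonneg.2 hF),
        mul_nonneg ha hFyp.le, mul_nonneg hb hFpz.le]
    · -- both far: f‖y-p‖ = f‖p-z‖ = f R₂
      have hab : f ‖y - p‖ = f ‖p - z‖ := by rw [hf_const _ hyp, hf_const _ hpz]
      have hF : 1 + ε * V y + ε * V z ≤
          (1 + ε * V y + ε * V p) + (1 + ε * V p + ε * V z) := by
        have : (0:ℝ) ≤ ε * V p := mul_nonneg hε.le hVp.le
        linarith
      nlinarith [mul_le_mul_of_nonneg_right hca hFyz.le,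
        mul_nonneg ha (sub_nonneg.2 hF),
        mul_nonneg ha hFyp.le, mul_nonneg hb hFpz.le]
end

section
/- Let α_μ, α_ν, β_μ, β_ν ∈ (0, ∞) with T > 0, and define γ_∞^μ = 2(α_μ + √(α_μ² + 4α_μ/(T²β_ν)))^{-1} and γ_∞^ν = 2(α_ν + √(α_ν² + 4α_ν/(T²β_μ)))^{-1}. If T > (β_μβ_ν − α_μα_ν)/√(α_μβ_μα_νβ_ν(α_μ+β_μ)(α_ν+β_ν)), then T² > γ_∞^μ γ_∞^ν. -/
open Real

lemma key_lemma (α β T θ γ : ℝ) (hα : 0 < α) (hβ : 0 < β) (hT : 0 < T) (hθ : 0 < θ)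
    (hγ : γ = 2 * (α + Real.sqrt (α ^ 2 + 4 * α / (T ^ 2 * β)))⁻¹)
    (hcond : θ / α - 1 / (θ * β) < T) : θ * γ < T := by
  set s := Real.sqrt (α ^ 2 + 4 * α / (T ^ 2 * β)) with hs_def
  have hs0 : 0 ≤ s := Real.sqrt_nonneg _
  have hs2 : s ^ 2 = α ^ 2 + 4 * α / (T ^ 2 * β) := Real.sq_sqrt (by positivity)
  have hden : 0 < α + s := by linarith
  have hγ' : γ * (α + s) = 2 := by rw [hγ]; field_simp
  have hγpos : 0 < γ := by
    rw [hγ]; positivity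
  have e1 : γ * s = 2 - α * γ := by nlinarith [hγ']
  have e2 : T ^ 2 * β * s ^ 2 = T ^ 2 * β * α ^ 2 + 4 * α := by
    rw [hs2]; field_simp
  have heq : α * γ ^ 2 + α * T ^ 2 * β * γ = T ^ 2 * β := by
    linear_combination (T ^ 2 * β * ((2 - α * γ) + γ * s) / 4) * e1 - (γ ^ 2 / 4) * e2
  have h2 : θ * (θ * β) - α * 1 < T * (α * (θ * β)) := by
    rw [div_sub_div _ _ (ne_of_gt hα) (by positivity), div_lt_iff₀ (by positivity)] at hcond
    linarith
  by_contra h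
  push_neg at h
  have heqθ : α * (θ * γ) ^ 2 + α * T ^ 2 * β * θ * (θ * γ) = T ^ 2 * β * θ ^ 2 := by
    linear_combination θ ^ 2 * heq
  have h2T : T ^ 2 * (θ * (θ * β) - α * 1) < T ^ 2 * (T * (α * (θ * β))) :=
    mul_lt_mul_of_pos_left h2 (by positivity)
  have a1 : 0 ≤ α * (θ * γ - T) * (θ * γ + T) := by
    have := sub_nonneg.mpr h
    positivity
  have a2 : 0 ≤ α * T ^ 2 * β * θ * (θ * γ - T) := by
    have := sub_nonneg.mpr h
    positivity
  nlinarith [heqθ, h2T, a1, a2]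


/-- Explicit convergence threshold for Sinkhorn with strongly log-concave marginals:
with `γ_∞^μ = 2(α_μ + √(α_μ² + 4α_μ/(T²β_ν)))⁻¹` and
`γ_∞^ν = 2(α_ν + √(α_ν² + 4α_ν/(T²β_μ)))⁻¹`, if
`T > (β_μβ_ν − α_μα_ν)/√(α_μβ_μα_νβ_ν(α_μ+β_μ)(α_ν+β_ν))` then `T² > γ_∞^μ γ_∞^ν`. -/
theorem sinkhorn_threshold (αμ αν βμ βν T : ℝ)
    (hαμ : 0 < αμ) (hαν : 0 < αν) (hβμ : 0 < βμ) (hβν : 0 < βν) (hT : 0 < T)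
    (γμ γν : ℝ)
    (hγμ : γμ = 2 * (αμ + Real.sqrt (αμ ^ 2 + 4 * αμ / (T ^ 2 * βν)))⁻¹)
    (hγν : γν = 2 * (αν + Real.sqrt (αν ^ 2 + 4 * αν / (T ^ 2 * βμ)))⁻¹)
    (hthr : (βμ * βν - αμ * αν)
        / Real.sqrt (αμ * βμ * αν * βν * (αμ + βμ) * (αν + βν)) < T) :
    γμ * γν < T ^ 2 := by
  set A := Real.sqrt (αμ * βμ * (αν + βν)) with hA_def
  set B := Real.sqrt (αν * βν * (αμ + βμ)) with hB_def
  have hA : 0 < A := Real.sqrt_pos.mpr (by positivity)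
  have hB : 0 < B := Real.sqrt_pos.mpr (by positivity)
  have hA2 : A ^ 2 = αμ * βμ * (αν + βν) := Real.sq_sqrt (by positivity)
  have hB2 : B ^ 2 = αν * βν * (αμ + βμ) := Real.sq_sqrt (by positivity)
  have hD : Real.sqrt (αμ * βμ * αν * βν * (αμ + βμ) * (αν + βν)) = A * B := by
    rw [hA_def, hB_def, ← Real.sqrt_mul (by positivity)]
    ring_nf
  set θ := A / B with hθ_def
  have hθ : 0 < θ := by positivity
  have cond1 : θ / αμ - 1 / (θ * βν) < T := by
    have heq : θ / αμ - 1 / (θ * βν) = (βμ * βν - αμ * αν) / (A * B) := by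
      rw [hθ_def]
      field_simp
      ring_nf
      linear_combination βν * hA2 - αμ * hB2
    rw [heq, ← hD]
    exact hthr
  have cond2 : θ⁻¹ / αν - 1 / (θ⁻¹ * βμ) < T := by
    have heq : θ⁻¹ / αν - 1 / (θ⁻¹ * βμ) = (βμ * βν - αμ * αν) / (A * B) := by
      rw [hθ_def]
      field_simp
      ring_nf
      linear_combination βμ * hB2 - αν * hA2
    rw [heq, ← hD]
    exact hthr
  have k1 : θ * γμ < T := key_lemma αμ βν T θ γμ hαμ hβν hT hθ hγμ cond1
  have k2 : θ⁻¹ * γν < T := key_lemma αν βμ T θ⁻¹ γν hαν hβμ hT (by positivity) hγν cond2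
  have hγμpos : 0 < γμ := by rw [hγμ]; positivity
  have hγνpos : 0 < γν := by rw [hγν]; positivity
  have hmul : (θ * γμ) * (θ⁻¹ * γν) < T * T :=
    mul_lt_mul'' k1 k2 (by positivity) (by positivity)
  have heq2 : (θ * γμ) * (θ⁻¹ * γν) = γμ * γν := by
    field_simp
  calc γμ * γν = (θ * γμ) * (θ⁻¹ * γν) := heq2.symm
    _ < T * T := hmul
    _ = T ^ 2 := by ring
end
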